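/- arXiv:1909.12819 — 5 statements merged into one kernel-verified Lean document; each statement's English description precedes it below -/
import Mathlib

section
/- Let C be a triangulated category with a t-structure t. For objects M, N in C_{t≤0} and a morphism f : M → N, the cone of f belongs to C_{t≤0} if and only if the induced morphism H_0^t(f) : H_0^t(M) → H_0^t(N) is a monomorphism in the heart of t. -/
open CategoryTheory CategoryTheory.Limits CategoryTheory.Pretriangulated Opposite

universe v u v₂ u₂

variable (C : Type u) [Category.{v} C] [HasZeroObject C] [HasShift C ℤ]
  [Preadditive C] [∀ (n : ℤ), (shiftFunctor C n).Additive] [Pretriangulated C]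

/-- The data of the heart of a t-structure `t` (given as an abelian category `A`
fully faithfully embedded in `C` with essential image the objects that are both `≤ 0`
and `≥ 0` for `t`) together with the zeroth t-homology functor `H : C ⥤ A`, which is
homological, restricts to the identity on the heart, and kills `C_{t ≥ 1}` and `C_{t ≤ -1}`.
(We use the homological convention of the paper: `C_{t ≤ n}` corresponds to `t.ge (-n)`
and `C_{t ≥ n}` corresponds to `t.le (-n)` in Mathlib's conventions.) -/
structure THomologyData (t : Triangulated.TStructure C)
    (A : Type u₂) [Category.{v₂} A] [Abelian A] where
  /-- the embedding of the heart -/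
  inc : A ⥤ C
  full : inc.Full
  faithful : inc.Faithful
  le_heart : ∀ X : A, t.le 0 (inc.obj X)
  ge_heart : ∀ X : A, t.ge 0 (inc.obj X)
  essSurj_heart : ∀ X : C, t.le 0 X → t.ge 0 X → ∃ Y : A, Nonempty (inc.obj Y ≅ X)
  /-- the zeroth t-homology functor -/
  H : C ⥤ A
  unit : inc ⋙ H ≅ 𝟭 A
  homological : ∀ (T : Triangle C), T ∈ (distTriang C) →
    ∃ (hz : H.map T.mor₁ ≫ H.map T.mor₂ = 0),
      (ShortComplex.mk (H.map T.mor₁) (H.map T.mor₂) hz).Exact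
  vanish_ge_one : ∀ X : C, t.ge 1 X → IsZero (H.obj X)
  vanish_le_neg_one : ∀ X : C, t.le (-1) X → IsZero (H.obj X)

section Aux

variable {C}

/-- Hom vanishing from `LE a` to `GE b` when `a < b`. -/
lemma aux_hom_zero (t : Triangulated.TStructure C) {a b : ℤ} (hab : a < b)
    {X Y : C} (hX : t.le a X) (hY : t.ge b Y) (f : X ⟶ Y) : f = 0 := by
  have hX' : t.le 0 (X⟦a⟧) := t.le_shift a a 0 (by omega) X hX
  have hY' : t.ge (b - a) (Y⟦a⟧) := t.ge_shift b a (b - a) (by omega) Y hY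
  have hY'' : t.ge 1 (Y⟦a⟧) := Triangulated.TStructure.ge_antitone t (by omega) _ hY'
  have : (shiftFunctor C a).map f = 0 := t.zero' ((shiftFunctor C a).map f) hX' hY''
  exact (shiftFunctor C a).map_injective (by simpa using this)

/-- An object receiving no nonzero maps from `LE (n-1)` objects is in `GE n`. -/
lemma aux_ge_of_orthogonal (t : Triangulated.TStructure C) (n : ℤ) (Y : C)
    (h : ∀ (W : C), t.le (n - 1) W → ∀ (f : W ⟶ Y), f = 0) : t.ge n Y := by
  obtain ⟨X₀, Y₁, hX₀, hY₁, a, b, c, mem⟩ := t.exists_triangle Y (n - 1) n (by omega)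
  have ha : a = 0 := h X₀ hX₀ a
  -- mor₁ of the triangle is zero, hence obj₁ is zero and mor₂ is an isomorphism
  have hzero : IsZero X₀ := by
    obtain ⟨u, hu⟩ := Triangle.coyoneda_exact₂ _ (inv_rot_of_distTriang _ mem)
      (𝟙 X₀ : X₀ ⟶ (Triangle.mk a b c).invRotate.obj₂) (by change 𝟙 X₀ ≫ a = 0; rw [ha, comp_zero])
    have hu0 : u = 0 := aux_hom_zero t (show n - 1 < n + 1 by omega) hX₀
      (t.ge_shift n (-1) (n + 1) (by omega) Y₁ hY₁) u
    rw [hu0, zero_comp] at hu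
    rw [IsZero.iff_id_eq_zero]
    exact hu
  have : IsIso b := (Triangle.isZero₁_iff_isIso₂ _ mem).1 hzero
  exact (t.ge n).prop_of_iso (asIso b).symm hY₁

/-- `GE n` is closed under extensions. -/
lemma aux_ge_ext (t : Triangulated.TStructure C) (n : ℤ) (T : Triangle C)
    (hT : T ∈ distTriang C) (h₁ : t.ge n T.obj₁) (h₃ : t.ge n T.obj₃) :
    t.ge n T.obj₂ := by
  refine aux_ge_of_orthogonal t n _ (fun W hW f => ?_)
  have hf₂ : f ≫ T.mor₂ = 0 := aux_hom_zero t (by omega) hW h₃ _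
  obtain ⟨g, hg⟩ := Triangle.coyoneda_exact₂ _ hT f hf₂
  have : g = 0 := aux_hom_zero t (by omega) hW h₁ g
  rw [hg, this, zero_comp]

end Aux

/-- For objects `M, N` in `C_{t ≤ 0}` and `f : M ⟶ N`, the cone of `f` belongs to
`C_{t ≤ 0}` if and only if `H_0^t f` is a monomorphism in the heart of `t`. -/
theorem cone_le_zero_iff_mono_homology
    (t : Triangulated.TStructure C) {A : Type u₂} [Category.{v₂} A] [Abelian A]
    (d : THomologyData C t A)
    (M N : C) (hM : t.ge 0 M) (hN : t.ge 0 N) (f : M ⟶ N)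
    (Z : C) (g : N ⟶ Z) (h : Z ⟶ M⟦(1 : ℤ)⟧)
    (hT : Triangle.mk f g h ∈ distTriang C) :
    t.ge 0 Z ↔ Mono (d.H.map f) := by
  set T : Triangle C := Triangle.mk f g h with hTdef
  have hT1 : T.invRotate ∈ distTriang C := inv_rot_of_distTriang _ hT
  obtain ⟨hz1, hex1⟩ := d.homological _ hT1
  constructor
  · intro hZ
    -- H(Z⟦-1⟧) = 0 since Z⟦-1⟧ ∈ GE 1
    have hZ1 : t.ge 1 (Z⟦(-1 : ℤ)⟧) := t.ge_shift 0 (-1) 1 (by omega) Z hZ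
    have hzero : IsZero (d.H.obj (Z⟦(-1 : ℤ)⟧)) := d.vanish_ge_one _ hZ1
    have hf0 : d.H.map T.invRotate.mor₁ = 0 := hzero.eq_zero_of_src _
    have := hex1.mono_g hf0
    exact this
  · intro hmono
    -- Step 1: H(Z⟦-1⟧) = 0
    have hT2 : T.invRotate.invRotate ∈ distTriang C := inv_rot_of_distTriang _ hT1
    obtain ⟨hz2, hex2⟩ := d.homological _ hT2
    have hN1 : t.ge 1 (N⟦(-1 : ℤ)⟧) := t.ge_shift 0 (-1) 1 (by omega) N hN
    have hf0 : d.H.map T.invRotate.invRotate.mor₁ = 0 :=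
      (d.vanish_ge_one _ hN1).eq_zero_of_src _
    have hmonow : Mono (d.H.map T.invRotate.mor₁) := by
      have := hex2.mono_g hf0
      exact this
    have hw0 : d.H.map T.invRotate.mor₁ = 0 := by
      have : d.H.map T.invRotate.mor₁ ≫ d.H.map f = 0 := hz1
      exact zero_of_comp_mono (Y := d.H.obj M) (Z := d.H.obj N) (d.H.map f) this
    have hZm1 : IsZero (d.H.obj (Z⟦(-1 : ℤ)⟧)) :=
      IsZero.of_mono_eq_zero (X := d.H.obj T.invRotate.obj₁) (Y := d.H.obj T.invRotate.obj₂)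
        (d.H.map T.invRotate.mor₁) hw0
    -- Step 2: Z ∈ GE (-1)
    have hZge : t.ge (-1) Z := by
      refine aux_ge_ext t (-1) T.rotate (rot_of_distTriang _ hT) ?_ ?_
      · exact Triangulated.TStructure.ge_antitone t (by omega) _ hN
      · exact t.ge_shift 0 1 (-1) (by omega) M hM
    -- Step 3: W := Z⟦-1⟧ ∈ GE 0, truncation triangle for W
    set W : C := Z⟦(-1 : ℤ)⟧ with hWdef
    have hWge : t.ge 0 W := t.ge_shift (-1) (-1) 0 (by omega) Z hZge
    obtain ⟨X₀, Y₁, hX₀, hY₁, a, b, c, mem⟩ := t.exists_triangle W 0 1 rfl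
    set TW : Triangle C := Triangle.mk a b c with hTWdef
    have hTW1 : TW.invRotate ∈ distTriang C := inv_rot_of_distTriang _ mem
    -- X₀ ∈ GE 0 (extension of Y₁⟦-1⟧ ∈ GE 2 and W ∈ GE 0)
    have hY₁s : t.ge 2 (Y₁⟦(-1 : ℤ)⟧) := t.ge_shift 1 (-1) 2 (by omega) Y₁ hY₁
    have hX₀ge : t.ge 0 X₀ := by
      refine aux_ge_ext t 0 TW.invRotate hTW1 ?_ ?_
      · exact Triangulated.TStructure.ge_antitone t (by omega) _ hY₁s
      · exact hWge
    -- H(X₀) = 0 : it injects into H(W) = H(Z⟦-1⟧) = 0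
    obtain ⟨hz3, hex3⟩ := d.homological _ hTW1
    have hY₁z : IsZero (d.H.obj (Y₁⟦(-1 : ℤ)⟧)) :=
      d.vanish_ge_one _ (Triangulated.TStructure.ge_antitone t (by omega) _ hY₁s)
    have hmonoa : Mono (d.H.map a) := by
      have := hex3.mono_g (hY₁z.eq_zero_of_src _)
      exact this
    have ha0 : d.H.map a = 0 := hZm1.eq_zero_of_tgt _
    have hHX₀ : IsZero (d.H.obj X₀) := IsZero.of_mono_eq_zero (d.H.map a) ha0
    -- X₀ is in the heart, so X₀ ≅ inc Y with Y ≅ H(X₀) = 0, hence X₀ = 0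
    obtain ⟨Y, ⟨e⟩⟩ := d.essSurj_heart X₀ hX₀ hX₀ge
    have hYz : IsZero Y :=
      IsZero.of_iso hHX₀ ((d.unit.app Y).symm ≪≫ d.H.mapIso e)
    have hX₀z : IsZero X₀ := by
      have hfull := d.full
      have hfaithful := d.faithful
      have hsub : Subsingleton (Y ⟶ Y) := ⟨fun u v => hYz.eq_of_src u v⟩
      have h11 : (𝟙 (d.inc.obj Y) : d.inc.obj Y ⟶ d.inc.obj Y) = 0 := by
        obtain ⟨u, hu⟩ := d.inc.map_surjective (𝟙 (d.inc.obj Y))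
        obtain ⟨v, hv⟩ := d.inc.map_surjective (0 : d.inc.obj Y ⟶ d.inc.obj Y)
        rw [← hu, ← hv, Subsingleton.elim u v]
      have : IsZero (d.inc.obj Y) := by
        rw [IsZero.iff_id_eq_zero, h11]
      exact IsZero.of_iso this e.symm
    -- Hence b : W ⟶ Y₁ is an isomorphism, so W ∈ GE 1, so Z ≅ W⟦1⟧ ∈ GE 0
    have hb : IsIso b := (Triangle.isZero₁_iff_isIso₂ _ mem).1 hX₀z
    have hWge1 : t.ge 1 W := (t.ge 1).prop_of_iso (asIso b).symm hY₁
    have hZiso : W⟦(1 : ℤ)⟧ ≅ Z := shiftNegShift Z (1 : ℤ)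
    exact (t.ge 0).prop_of_iso hZiso (t.ge_shift 1 1 0 (by omega) W hWge1)
end

section
/- Let C be a triangulated category closed under small products, and t a t-structure on C such that the class C_{t≤0} is closed under products. Then for any family (A_i) of objects of the heart Ht, the product of the A_i in Ht exists and is isomorphic to H_0^t of the product of the A_i computed in C. -/
open CategoryTheory CategoryTheory.Limits CategoryTheory.Pretriangulated Opposite

universe v u v₂ u₂

variable (C : Type u) [Category.{v} C] [HasZeroObject C] [HasShift C ℤ]
  [Preadditive C] [∀ (n : ℤ), (shiftFunctor C n).Additive] [Pretriangulated C]

namespace THomologyProofAux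

variable {C}

open Triangulated

lemma orth {t : Triangulated.TStructure C} {X Y : C} {a b : ℤ} (hX : t.le a X) (hY : t.ge b Y)
    (hab : a < b) (f : X ⟶ Y) : f = 0 := by
  apply (shiftFunctor C a).map_injective
  rw [Functor.map_zero]
  exact t.zero' _ (t.le_shift a a 0 (by omega) X hX)
    (t.ge_antitone (show (1 : ℤ) ≤ b - a by omega) _ (t.ge_shift b a (b - a) (by omega) Y hY))

lemma ge_shift_neg_one (t : Triangulated.TStructure C) {B : C} (hB : t.ge 1 B) :
    t.ge 1 (B⟦(-1 : ℤ)⟧) :=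
  t.ge_antitone (by omega) _ (t.ge_shift 1 (-1) 2 (by omega) B hB)

lemma ge_of_triangle {t : Triangulated.TStructure C} {T : Triangle C} (hT : T ∈ distTriang C)
    (h1 : t.ge 1 T.obj₁) (h3 : t.ge 0 T.obj₃) : t.ge 0 T.obj₂ := by
  have hzero : ∀ (Y : C), t.le (-1) Y → ∀ f : Y ⟶ T.obj₂, f = 0 := by
    intro Y hY f
    obtain ⟨g, hg⟩ := Triangle.coyoneda_exact₂ T hT f (orth hY h3 (by omega) _)
    rw [hg, orth hY h1 (by omega) g, zero_comp]
  obtain ⟨A', B'', hA', hB'', a', b', c', hT'⟩ := t.exists_triangle T.obj₂ (-1) 0 (by omega)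
  have ha' : a' = 0 := hzero _ hA' a'
  obtain ⟨g, hg⟩ := Triangle.coyoneda_exact₃ _ (rot_of_distTriang _ hT') (𝟙 (A'⟦(1 : ℤ)⟧)) (by
    dsimp [Triangle.rotate]
    show 𝟙 _ ≫ (-(shiftFunctor C (1 : ℤ)).map a') = 0
    rw [ha', Functor.map_zero, neg_zero, comp_zero])
  have hg0 : g = 0 := orth (t.le_shift (-1) 1 (-2) (by omega) A' hA') hB'' (by omega) g
  have hzA : IsZero A' := by
    rw [IsZero.iff_id_eq_zero]
    apply (shiftFunctor C (1 : ℤ)).map_injective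
    rw [CategoryTheory.Functor.map_id, CategoryTheory.Functor.map_zero]
    rw [hg0, zero_comp] at hg
    exact hg
  have : IsIso b' := (Triangle.isZero₁_iff_isIso₂ _ hT').1 hzA
  haveI := t.ge_isClosedUnderIsomorphisms 0
  exact (t.ge 0).prop_of_iso (asIso b').symm hB''

end THomologyProofAux


/-- If `C` has small products and `C_{t≤0}` (i.e. `t.ge 0` in Mathlib's conventions)
is closed under products, then for any family `(A_i)` of objects of the heart, the
product of the `A_i` exists in the heart and is given by `H_0^t` applied to the product
of the `A_i` computed in `C` (together with the images of the projections). -/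
theorem heart_product_eq_homology_product
    (t : Triangulated.TStructure C) {A : Type u₂} [Category.{v₂} A] [Abelian A]
    (d : THomologyData C t A) [HasProducts.{v} C]
    (hcl : ∀ {J : Type v} (g : J → C), (∀ j, t.ge 0 (g j)) → t.ge 0 (∏ᶜ g))
    {J : Type v} (As : J → A) :
    Nonempty (IsLimit (Fan.mk (d.H.obj (∏ᶜ fun j => d.inc.obj (As j)))
      (fun j => d.H.map (Pi.π (fun j => d.inc.obj (As j)) j) ≫ d.unit.hom.app (As j)))) := by
  haveI := d.full
  haveI := d.faithful
  set P : C := ∏ᶜ fun j => d.inc.obj (As j) with hPdef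
  have hP : t.ge 0 P := hcl _ (fun j => d.ge_heart _)
  obtain ⟨Q, B, hQle, hBge, a, b, c, hT⟩ := t.exists_triangle P 0 1 (by omega)
  have hQge : t.ge 0 Q :=
    THomologyProofAux.ge_of_triangle (inv_rot_of_distTriang _ hT)
      (THomologyProofAux.ge_shift_neg_one t hBge) hP
  obtain ⟨Q', ⟨e⟩⟩ := d.essSurj_heart Q hQle hQge
  have hHB : IsZero (d.H.obj B) := d.vanish_ge_one B hBge
  have hHB' : IsZero (d.H.obj (B⟦(-1 : ℤ)⟧)) :=
    d.vanish_ge_one _ (THomologyProofAux.ge_shift_neg_one t hBge)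
  obtain ⟨hz₁, hex₁⟩ := d.homological _ hT
  obtain ⟨hz₂, hex₂⟩ := d.homological _ (inv_rot_of_distTriang _ hT)
  have epiHa : Epi (d.H.map a) := hex₁.epi_f (hHB.eq_zero_of_tgt _)
  have monoHa : Mono (d.H.map a) := hex₂.mono_g (hHB'.eq_zero_of_src _)
  haveI : IsIso (d.H.map a) := isIso_of_mono_of_epi _
  have key : ∀ (T : A) (f : d.inc.obj T ⟶ P) (j : J),
      (d.unit.inv.app T ≫ d.H.map f) ≫
        (d.H.map (Pi.π (fun j => d.inc.obj (As j)) j) ≫ d.unit.hom.app (As j)) =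
      d.inc.preimage (f ≫ Pi.π (fun j => d.inc.obj (As j)) j) := by
    intro T f j
    have hnat := d.unit.hom.naturality (d.inc.preimage (f ≫ Pi.π (fun j => d.inc.obj (As j)) j))
    dsimp at hnat
    calc (d.unit.inv.app T ≫ d.H.map f) ≫
        (d.H.map (Pi.π (fun j => d.inc.obj (As j)) j) ≫ d.unit.hom.app (As j))
        = d.unit.inv.app T ≫
            d.H.map (d.inc.map (d.inc.preimage (f ≫ Pi.π (fun j => d.inc.obj (As j)) j))) ≫
            d.unit.hom.app (As j) := by
          rw [← d.inc.map_preimage (f ≫ Pi.π (fun j => d.inc.obj (As j)) j)]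
          simp [d.inc.map_preimage]
      _ = d.inc.preimage (f ≫ Pi.π (fun j => d.inc.obj (As j)) j) := by
          rw [hnat, Iso.inv_hom_id_app_assoc]
  have surj : ∀ (T : A) (ψ : T ⟶ d.H.obj P), ∃ f : d.inc.obj T ⟶ P,
      ψ = d.unit.inv.app T ≫ d.H.map f := by
    intro T ψ
    set g : T ⟶ Q' := ψ ≫ inv (d.H.map a) ≫ d.H.map e.inv ≫ d.unit.hom.app Q' with hg
    refine ⟨d.inc.map g ≫ e.hom ≫ a, ?_⟩
    have hnat : d.unit.inv.app T ≫ d.H.map (d.inc.map g) = g ≫ d.unit.inv.app Q' := by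
      have h := d.unit.inv.naturality g
      dsimp at h
      exact h.symm
    calc ψ = ψ ≫ inv (d.H.map a) ≫ d.H.map e.inv ≫
          (d.unit.hom.app Q' ≫ d.unit.inv.app Q') ≫ d.H.map e.hom ≫ d.H.map a := by
          simp
      _ = (g ≫ d.unit.inv.app Q') ≫ d.H.map e.hom ≫ d.H.map a := by
          rw [hg]; simp
      _ = d.unit.inv.app T ≫ d.H.map (d.inc.map g ≫ e.hom ≫ a) := by
          rw [d.H.map_comp, d.H.map_comp, ← hnat]
          simp
  refine ⟨mkFanLimit _
    (fun s => d.unit.inv.app s.pt ≫ d.H.map (Pi.lift fun j => d.inc.map (s.proj j))) ?_ ?_⟩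
  · intro s j
    rw [fan_mk_proj, key s.pt (Pi.lift fun j => d.inc.map (s.proj j)) j, Pi.lift_π,
      d.inc.preimage_map]
  · intro s m hm
    obtain ⟨f, hf⟩ := surj s.pt m
    have hfeq : f = Pi.lift fun j => d.inc.map (s.proj j) := by
      apply Pi.hom_ext
      intro j
      have h := hm j
      rw [fan_mk_proj, hf, key] at h
      rw [← d.inc.map_preimage (f ≫ Pi.π (fun j => d.inc.obj (As j)) j), h]
      exact (Pi.lift_π (fun j => d.inc.map (s.proj j)) j).symm
    rw [hf, hfeq]
    rfl
end

section
/- Let C be a triangulated category with coproducts and P a class of objects. If H' is a homological functor from C to an AB5 abelian category that preserves coproducts and vanishes on P, then H' vanishes on the strong extension-closure of P. In particular, if D is a class of compact objects with D ⊥ P, then D ⊥ (strong extension-closure of P). -/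
open CategoryTheory CategoryTheory.Limits CategoryTheory.Pretriangulated Opposite

universe v u v₂ u₂

variable (C : Type u) [Category.{v} C] [HasZeroObject C] [HasShift C ℤ]
  [Preadditive C] [∀ (n : ℤ), (shiftFunctor C n).Additive] [Pretriangulated C]


/-- The morphism `1 - shift : ⨁ Y_i ⟶ ⨁ Y_i` whose `i`-th component is
`ι_i - f_i ≫ ι_{i+1}`; a homotopy colimit of the sequence `(Y_i, f_i)` is by
definition a cone of this morphism. -/
noncomputable def hocolimMap [HasCountableCoproducts C]
    (Y : ℕ → C) (f : ∀ i, Y i ⟶ Y (i + 1)) : (∐ Y) ⟶ (∐ Y) :=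
  Sigma.desc fun i => Sigma.ι Y i - f i ≫ Sigma.ι Y (i + 1)

/-- The strong extension-closure of a class `P` of objects: the smallest class
containing `P` which contains all zero objects, is closed under retracts, under
small coproducts, and under homotopy colimits of sequences whose first term and
all cones of connecting morphisms lie in the class (i.e. is strongly extension-closed). -/
def strongExtClosure [HasCoproducts.{v} C] [HasCountableCoproducts C] (P : Set C) : Set C :=
  {X | ∀ Q : Set C, P ⊆ Q →
    (∀ Z : C, IsZero Z → Z ∈ Q) →
    (∀ (X' Y' : C) (i : X' ⟶ Y') (p : Y' ⟶ X'), i ≫ p = 𝟙 X' → Y' ∈ Q → X' ∈ Q) →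
    (∀ {J : Type v} (g : J → C), (∀ j, g j ∈ Q) → (∐ g) ∈ Q) →
    (∀ (Y : ℕ → C) (f : ∀ i, Y i ⟶ Y (i + 1)), Y 0 ∈ Q →
      (∀ (i : ℕ) (Zc : C) (u : Y (i + 1) ⟶ Zc) (w : Zc ⟶ (Y i)⟦(1 : ℤ)⟧),
        Triangle.mk (f i) u w ∈ (distTriang C) → Zc ∈ Q) →
      ∀ (W : C) (u : (∐ Y) ⟶ W) (w : W ⟶ (∐ Y)⟦(1 : ℤ)⟧),
        Triangle.mk (hocolimMap C Y f) u w ∈ (distTriang C) → W ∈ Q) →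
    X ∈ Q}

/-- An object `X` is compact if `Hom(X, -)` (as an `AddCommGrp`-valued functor)
preserves small coproducts. -/
def IsCompactObj (X : C) : Prop :=
  ∀ (J : Type v), PreservesColimitsOfShape (Discrete J) (preadditiveCoyoneda.obj (op X))

attribute [local instance] CategoryTheory.Abelian.hasFiniteBiproducts

namespace NeemanAux

variable {A : Type u₂} [Category.{v₂} A] [Abelian A]

section FiniteSums

variable (B : ℕ → A) (s : ∀ i, B i ⟶ B (i + 1))

/-- The biproduct of `B 0, ..., B n`. -/
noncomputable abbrev T (n : ℕ) : A := ⨁ (fun i : Fin (n + 1) => B i.val)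

/-- The inclusion `T n ⟶ T (n + 1)`. -/
noncomputable def incl (n : ℕ) : T B n ⟶ T B (n + 1) :=
  biproduct.desc fun i => biproduct.ι (fun j : Fin (n + 2) => B j.val) ⟨i.val, by omega⟩

/-- The sequence of partial sums as a functor `ℕ ⥤ A`. -/
noncomputable def F : ℕ ⥤ A := Functor.ofSequence (incl B)

/-- The shifted sequence of partial sums. -/
noncomputable def G : ℕ ⥤ A :=
  Functor.ofSequence (X := fun n => T B (n + 1)) (fun n => incl B (n + 1))

lemma ι_F_map (m n : ℕ) (h : m ≤ n) (j : Fin (m + 1)) :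
    biproduct.ι (fun i : Fin (m + 1) => B i.val) j ≫ (F B).map (homOfLE h) =
    biproduct.ι (fun i : Fin (n + 1) => B i.val) ⟨j.val, by omega⟩ := by
  induction n, h using Nat.le_induction with
  | base =>
    rw [show (homOfLE (le_refl m) : (m : ℕ) ⟶ m) = 𝟙 m from rfl, CategoryTheory.Functor.map_id]
    exact (Category.comp_id _).trans rfl
  | succ n h ih =>
    erw [show (homOfLE (Nat.le_succ_of_le h) : (m : ℕ) ⟶ (n+1 : ℕ)) =
        homOfLE h ≫ homOfLE (Nat.le_succ n) from rfl, Functor.map_comp, ← Category.assoc, ih]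
    have : (F B).map (homOfLE (Nat.le_succ n)) = incl B n :=
      Functor.ofSequence_map_homOfLE_succ _ n
    erw [this, incl, biproduct.ι_desc]

lemma ι_G_map (m n : ℕ) (h : m ≤ n) (j : Fin (m + 2)) :
    biproduct.ι (fun i : Fin (m + 2) => B i.val) j ≫ (G B).map (homOfLE h) =
    biproduct.ι (fun i : Fin (n + 2) => B i.val) ⟨j.val, by omega⟩ := by
  induction n, h using Nat.le_induction with
  | base =>
    rw [show (homOfLE (le_refl m) : (m : ℕ) ⟶ m) = 𝟙 m from rfl, CategoryTheory.Functor.map_id]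
    exact (Category.comp_id _).trans rfl
  | succ n h ih =>
    erw [show (homOfLE (Nat.le_succ_of_le h) : (m : ℕ) ⟶ (n+1 : ℕ)) =
        homOfLE h ≫ homOfLE (Nat.le_succ n) from rfl, Functor.map_comp, ← Category.assoc, ih]
    have : (G B).map (homOfLE (Nat.le_succ n)) = incl B (n + 1) :=
      Functor.ofSequence_map_homOfLE_succ _ n
    erw [this, incl, biproduct.ι_desc]

/-- The components of `1 - shift` on partial sums. -/
noncomputable def phi (n : ℕ) : T B n ⟶ T B (n + 1) :=
  biproduct.desc fun i => biproduct.ι (fun j : Fin (n + 2) => B j.val) ⟨i.val, by omega⟩ -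
    s i.val ≫ biproduct.ι (fun j : Fin (n + 2) => B j.val) ⟨i.val + 1, by omega⟩

/-- `1 - shift` as a natural transformation. -/
noncomputable def tau : F B ⟶ G B :=
  NatTrans.ofSequence (F := F B) (G := G B) (phi B s) (by
    intro n
    have hF : (F B).map (homOfLE (Nat.le_add_right n 1)) = incl B n :=
      Functor.ofSequence_map_homOfLE_succ _ n
    have hG : (G B).map (homOfLE (Nat.le_add_right n 1)) = incl B (n + 1) :=
      Functor.ofSequence_map_homOfLE_succ _ n
    rw [hF, hG]
    apply biproduct.hom_ext'
    intro i
    erw [← Category.assoc, ← Category.assoc, biproduct.ι_desc, biproduct.ι_desc,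
      biproduct.ι_desc, Preadditive.sub_comp, Category.assoc, biproduct.ι_desc, biproduct.ι_desc]
    simp [incl, phi, Preadditive.sub_comp, Category.assoc]
    rfl)

/-- A partial sum of the `s` maps used to split `phi`. -/
noncomputable def rho (n j : ℕ) : B j ⟶ T B n :=
  if h : j < n + 1 then
    biproduct.ι (fun i : Fin (n + 1) => B i.val) ⟨j, h⟩ + s j ≫ rho n (j + 1)
  else 0
termination_by n + 1 - j

lemma rho_eq (n j : ℕ) (h : j < n + 1) :
    rho B s n j = biproduct.ι (fun i : Fin (n + 1) => B i.val) ⟨j, h⟩ +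
      s j ≫ rho B s n (j + 1) := by
  rw [rho, dif_pos h]

lemma phi_retraction (n : ℕ) :
    phi B s n ≫ biproduct.desc (fun j : Fin (n + 2) => rho B s n j.val) = 𝟙 (T B n) := by
  apply biproduct.hom_ext'
  intro i
  rw [← Category.assoc, Category.comp_id]
  simp only [phi, biproduct.ι_desc, Preadditive.sub_comp, Category.assoc, biproduct.ι_desc]
  rw [rho_eq B s n i.val i.isLt]
  simp

lemma mono_phi (n : ℕ) : Mono (phi B s n) := by
  haveI : IsSplitMono (phi B s n) :=
    IsSplitMono.mk' ⟨biproduct.desc (fun j : Fin (n + 2) => rho B s n j.val),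
      phi_retraction B s n⟩
  infer_instance

variable (X : A) (ι : ∀ i : ℕ, B i ⟶ X)

/-- The canonical map from a partial sum to the coproduct. -/
noncomputable def sigma (n : ℕ) : T B n ⟶ X := biproduct.desc fun i => ι i.val

lemma F_map_sigma (n m : ℕ) (f : n ⟶ m) : (F B).map f ≫ sigma B X ι m = sigma B X ι n := by
  apply biproduct.hom_ext'
  intro j
  erw [← Category.assoc, show f = homOfLE (leOfHom f) from rfl, ι_F_map B n m (leOfHom f) j]
  simp [sigma]
  erw [biproduct.ι_desc]

lemma G_map_sigma (n m : ℕ) (f : n ⟶ m) :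
    (G B).map f ≫ sigma B X ι (m + 1) = sigma B X ι (n + 1) := by
  apply biproduct.hom_ext'
  intro j
  erw [← Category.assoc, show f = homOfLE (leOfHom f) from rfl, ι_G_map B n m (leOfHom f) j]
  simp [sigma]
  erw [biproduct.ι_desc]

/-- The cocone on `F` with point the coproduct. -/
noncomputable def cF : Cocone (F B) where
  pt := X
  ι :=
    { app := sigma B X ι
      naturality := fun n m f => by
        dsimp
        erw [Category.comp_id]
        exact F_map_sigma B X ι n m f }

/-- The cocone on `G` with point the coproduct. -/
noncomputable def cG : Cocone (G B) where
  pt := X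
  ι :=
    { app := fun n => sigma B X ι (n + 1)
      naturality := fun n m f => by
        dsimp
        erw [Category.comp_id]
        exact G_map_sigma B X ι n m f }

lemma key_F (t : Cocone (F B)) (jv : ℕ) (n : ℕ) (h : jv ≤ n) :
    biproduct.ι (fun i : Fin (n + 1) => B i.val) ⟨jv, by omega⟩ ≫ t.ι.app n =
    biproduct.ι (fun i : Fin (jv + 1) => B i.val) ⟨jv, by omega⟩ ≫ t.ι.app jv := by
  induction n, h using Nat.le_induction with
  | base => rfl
  | succ n h ih =>
    erw [← ih, ← t.w (homOfLE (Nat.le_succ n)), ← Category.assoc]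
    congr 1
    erw [show (F B).map (homOfLE (Nat.le_succ n)) = incl B n from
      Functor.ofSequence_map_homOfLE_succ _ n, incl, biproduct.ι_desc]

lemma key_G (t : Cocone (G B)) (jv : ℕ) (n : ℕ) (h : jv ≤ n + 1) :
    biproduct.ι (fun i : Fin (n + 2) => B i.val) ⟨jv, by omega⟩ ≫ t.ι.app n =
    biproduct.ι (fun i : Fin (jv + 2) => B i.val) ⟨jv, by omega⟩ ≫ t.ι.app jv := by
  induction n with
  | zero =>
    rcases Nat.le_one_iff_eq_zero_or_eq_one.mp h with rfl | rfl
    · rfl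
    · erw [← t.w (homOfLE (Nat.le_succ 0)), ← Category.assoc]
      congr 1
      erw [show (G B).map (homOfLE (Nat.le_succ 0)) = incl B 1 from
        Functor.ofSequence_map_homOfLE_succ _ 0, incl, biproduct.ι_desc]
  | succ n ih =>
    by_cases hj : jv ≤ n + 1
    · erw [← ih hj, ← t.w (homOfLE (Nat.le_succ n)), ← Category.assoc]
      congr 1
      erw [show (G B).map (homOfLE (Nat.le_succ n)) = incl B (n + 1) from
        Functor.ofSequence_map_homOfLE_succ _ n, incl, biproduct.ι_desc]
    · obtain rfl : jv = n + 2 := by omega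
      erw [← t.w (homOfLE (Nat.le_succ (n + 1))), ← Category.assoc]
      congr 1
      erw [show (G B).map (homOfLE (Nat.le_succ (n + 1))) = incl B (n + 2) from
        Functor.ofSequence_map_homOfLE_succ _ (n + 1), incl, biproduct.ι_desc]

variable (hc : IsColimit (Cofan.mk X ι))

lemma fac_F (t : Cocone (F B)) (n : ℕ) :
    sigma B X ι n ≫ hc.desc (Cofan.mk t.pt fun i =>
      biproduct.ι (fun k : Fin (i + 1) => B k.val) ⟨i, by omega⟩ ≫ t.ι.app i) = t.ι.app n := by
  apply biproduct.hom_ext'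
  intro j
  rw [← Category.assoc]
  have h1 : biproduct.ι (fun i : Fin (n + 1) => B i.val) j ≫ sigma B X ι n = ι j.val := by
    simp [sigma]
  rw [h1]
  have h2 := hc.fac (Cofan.mk t.pt fun i =>
    biproduct.ι (fun k : Fin (i + 1) => B k.val) ⟨i, by omega⟩ ≫ t.ι.app i) ⟨j.val⟩
  rw [show (Cofan.mk X ι).ι.app ⟨j.val⟩ = ι j.val from rfl] at h2
  rw [h2]
  exact (key_F B t j.val n (by omega)).symm

lemma fac_G (t : Cocone (G B)) (n : ℕ) :
    sigma B X ι (n + 1) ≫ hc.desc (Cofan.mk t.pt fun i =>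
      biproduct.ι (fun k : Fin (i + 2) => B k.val) ⟨i, by omega⟩ ≫ t.ι.app i) = t.ι.app n := by
  apply biproduct.hom_ext'
  intro j
  rw [← Category.assoc]
  have h1 : biproduct.ι (fun i : Fin (n + 2) => B i.val) j ≫ sigma B X ι (n + 1) = ι j.val := by
    simp [sigma]
  rw [h1]
  have h2 := hc.fac (Cofan.mk t.pt fun i =>
    biproduct.ι (fun k : Fin (i + 2) => B k.val) ⟨i, by omega⟩ ≫ t.ι.app i) ⟨j.val⟩
  rw [show (Cofan.mk X ι).ι.app ⟨j.val⟩ = ι j.val from rfl] at h2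
  rw [h2]
  exact (key_G B t j.val n (by omega)).symm

/-- The cocone `cF` is a colimit. -/
noncomputable def isColimitCF : IsColimit (cF B X ι) where
  desc t := hc.desc (Cofan.mk t.pt fun i =>
    biproduct.ι (fun k : Fin (i + 1) => B k.val) ⟨i, by omega⟩ ≫ t.ι.app i)
  fac t n := fac_F B X ι hc t n
  uniq t m hm := by
    apply hc.hom_ext
    rintro ⟨i⟩
    rw [hc.fac]
    show ι i ≫ m = biproduct.ι (fun k : Fin (i + 1) => B k.val) ⟨i, Nat.lt_succ_self i⟩ ≫
      t.ι.app i
    have h1 : ι i = biproduct.ι (fun k : Fin (i + 1) => B k.val) ⟨i, Nat.lt_succ_self i⟩ ≫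
        sigma B X ι i := by simp [sigma]
    erw [h1, Category.assoc]
    congr 1
    exact hm i

/-- The cocone `cG` is a colimit. -/
noncomputable def isColimitCG : IsColimit (cG B X ι) where
  desc t := hc.desc (Cofan.mk t.pt fun i =>
    biproduct.ι (fun k : Fin (i + 2) => B k.val) ⟨i, by omega⟩ ≫ t.ι.app i)
  fac t n := fac_G B X ι hc t n
  uniq t m hm := by
    apply hc.hom_ext
    rintro ⟨i⟩
    rw [hc.fac]
    show ι i ≫ m = biproduct.ι (fun k : Fin (i + 2) => B k.val) ⟨i, by omega⟩ ≫ t.ι.app i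
    have h1 : ι i = biproduct.ι (fun k : Fin (i + 2) => B k.val) ⟨i, by omega⟩ ≫
        sigma B X ι (i + 1) := by simp [sigma]
    erw [h1, Category.assoc]
    congr 1
    exact hm i

lemma phi_sigma (φ : X ⟶ X) (hφ : ∀ i, ι i ≫ φ = ι i - s i ≫ ι (i + 1)) (n : ℕ) :
    phi B s n ≫ sigma B X ι (n + 1) = sigma B X ι n ≫ φ := by
  apply biproduct.hom_ext'
  intro i
  rw [← Category.assoc, ← Category.assoc]
  have h1 : biproduct.ι (fun j : Fin (n + 1) => B j.val) i ≫ sigma B X ι n = ι i.val := by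
    simp [sigma]
  rw [h1, hφ i.val]
  simp [phi, sigma, Preadditive.sub_comp, Category.assoc]

end FiniteSums

/-- In an AB5 abelian category, `1 - shift` on a countable coproduct is mono. -/
lemma mono_hocolim [HasFilteredColimits A] [AB5 A]
    (B : ℕ → A) (s : ∀ i, B i ⟶ B (i + 1)) (X : A) (ι : ∀ i : ℕ, B i ⟶ X)
    (hc : IsColimit (Cofan.mk X ι)) (φ : X ⟶ X)
    (hφ : ∀ i, ι i ≫ φ = ι i - s i ≫ ι (i + 1)) : Mono φ := by
  let e : ℕ ≌ ULiftHom.{v₂} (ULift.{v₂} ℕ) := ULiftHomULiftCategory.equiv.{v₂, v₂} ℕ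
  let F' := e.inverse ⋙ F B
  let G' := e.inverse ⋙ G B
  let τ' : F' ⟶ G' := Functor.whiskerLeft e.inverse (tau B s)
  haveI : ∀ j, Mono (τ'.app j) := fun j => mono_phi B s _
  haveI : Mono τ' := NatTrans.mono_of_mono_app τ'
  haveI : PreservesFiniteLimits (colim (J := ULiftHom.{v₂} (ULift.{v₂} ℕ)) (C := A)) :=
    HasExactColimitsOfShape.preservesFiniteLimits
  haveI : (colim (J := ULiftHom.{v₂} (ULift.{v₂} ℕ)) (C := A)).PreservesMonomorphisms :=
    inferInstance
  haveI : Mono ((colim (J := ULiftHom.{v₂} (ULift.{v₂} ℕ)) (C := A)).map τ') :=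
    Functor.map_mono _ τ'
  haveI : Mono (colimMap τ') := by rwa [colim_map] at this
  let hcF : IsColimit ((cF B X ι).whisker e.symm.functor) :=
    (isColimitCF B X ι hc).whiskerEquivalence e.symm
  let hcG : IsColimit ((cG B X ι).whisker e.symm.functor) :=
    (isColimitCG B X ι hc).whiskerEquivalence e.symm
  let hcF' : IsColimit ((cF B X ι).whisker e.inverse : Cocone F') := hcF
  let hcG' : IsColimit ((cG B X ι).whisker e.inverse : Cocone G') := hcG
  let iF : colimit F' ≅ X := (colimit.isColimit F').coconePointUniqueUpToIso hcF'
  let iG : colimit G' ≅ X := (colimit.isColimit G').coconePointUniqueUpToIso hcG'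
  have square : colimMap τ' ≫ iG.hom = iF.hom ≫ φ := by
    apply colimit.hom_ext
    intro j
    have hg : colimit.ι G' j ≫ iG.hom = sigma B X ι (e.inverse.obj j + 1) :=
      IsColimit.comp_coconePointUniqueUpToIso_hom (colimit.isColimit G') hcG' j
    have hf : colimit.ι F' j ≫ iF.hom = sigma B X ι (e.inverse.obj j) :=
      IsColimit.comp_coconePointUniqueUpToIso_hom (colimit.isColimit F') hcF' j
    rw [ι_colimMap_assoc, hg, ← Category.assoc, hf]
    exact phi_sigma B s X ι φ hφ _
  have hφeq : φ = iF.inv ≫ (colimMap τ' ≫ iG.hom) := by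
    rw [square, Iso.inv_hom_id_assoc]
  rw [hφeq]
  infer_instance

/-- The cocone point of a colimit cofan over zero objects is zero. -/
lemma isZero_pt {J : Type*} {D : Discrete J ⥤ A} {c : Cocone D} (hc : IsColimit c)
    (h : ∀ j : J, IsZero (D.obj ⟨j⟩)) : IsZero c.pt := by
  rw [IsZero.iff_id_eq_zero]
  apply hc.hom_ext
  rintro ⟨j⟩
  exact (h j).eq_of_src _ _

end NeemanAux

section VanishAux

open ZeroObject

variable {C}

/-- The main vanishing statement: a coproduct-preserving homological functor to an AB5
abelian category which vanishes on `P` vanishes on the strong extension-closure of `P`. -/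
theorem vanishAux
    [HasCoproducts.{v} C] [HasCountableCoproducts C]
    {A : Type u₂} [Category.{v₂} A] [Abelian A] [HasFilteredColimits A] [AB5 A]
    (P : Set C) (H' : C ⥤ A)
    (hH : ∀ (T : Triangle C), T ∈ (distTriang C) →
      ∃ (hz : H'.map T.mor₁ ≫ H'.map T.mor₂ = 0),
        (ShortComplex.mk (H'.map T.mor₁) (H'.map T.mor₂) hz).Exact)
    (hcc : ∀ (J : Type v), PreservesColimitsOfShape (Discrete J) H')
    (hvanish : ∀ X ∈ P, IsZero (H'.obj X)) :
    ∀ X ∈ strongExtClosure C P, IsZero (H'.obj X) := by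
  -- setup: H' is additive
  haveI : PreservesColimitsOfShape (Discrete (ULift.{v} WalkingPair)) H' :=
    hcc (ULift.{v} WalkingPair)
  haveI : PreservesColimitsOfShape (Discrete WalkingPair) H' :=
    preservesColimitsOfShape_of_equiv (Discrete.equivalence Equiv.ulift) H'
  haveI : PreservesColimitsOfShape (Discrete (ULift.{v} Empty)) H' :=
    hcc (ULift.{v} Empty)
  haveI : PreservesColimitsOfShape (Discrete PEmpty.{1}) H' :=
    preservesColimitsOfShape_of_equiv (Discrete.equivalence (Equiv.equivPEmpty (ULift.{v} Empty))) H'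
  have hzero : ∀ Z : C, IsZero Z → IsZero (H'.obj Z) := by
    intro Z hZ
    have hinit : IsInitial (H'.obj Z) := hZ.isInitial.isInitialObj H' Z
    rw [IsZero.iff_id_eq_zero]
    exact hinit.hom_ext _ _
  haveI : H'.PreservesZeroMorphisms := by
    constructor
    intro X Y
    have h0 : IsZero (H'.obj (0 : C)) := hzero _ (isZero_zero C)
    calc H'.map (0 : X ⟶ Y) = H'.map ((0 : X ⟶ (0 : C)) ≫ (0 : (0 : C) ⟶ Y)) := by
          rw [zero_comp]
      _ = H'.map (0 : X ⟶ (0 : C)) ≫ H'.map ((0 : (0 : C) ⟶ Y)) := H'.map_comp _ _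
      _ = 0 := by rw [h0.eq_of_tgt (H'.map (0 : X ⟶ (0 : C))) 0, zero_comp]
  haveI : HasBinaryBiproducts C := HasBinaryBiproducts.of_hasBinaryCoproducts
  haveI := preservesBinaryBiproducts_of_preservesBinaryCoproducts H'
  haveI : H'.Additive := Functor.additive_of_preservesBinaryBiproducts H'
  haveI : PreservesColimitsOfShape (Discrete (ULift.{v} ℕ)) H' := hcc (ULift.{v} ℕ)
  haveI : PreservesColimitsOfShape (Discrete ℕ) H' :=
    preservesColimitsOfShape_of_equiv (Discrete.equivalence Equiv.ulift) H'
  intro X hX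
  refine hX {Z | IsZero (H'.obj Z)} hvanish hzero ?_ ?_ ?_
  · -- retracts
    intro X' Y' i p hip hY
    rw [Set.mem_setOf_eq, IsZero.iff_id_eq_zero]
    calc 𝟙 (H'.obj X') = H'.map (𝟙 X') := (H'.map_id X').symm
      _ = H'.map (i ≫ p) := by rw [hip]
      _ = H'.map i ≫ H'.map p := H'.map_comp i p
      _ = 0 := by rw [hY.eq_of_tgt (H'.map i) 0, zero_comp]
  · -- coproducts
    intro J g hg
    haveI := hcc J
    have hco := isColimitOfHasCoproductOfPreservesColimit H' g
    exact NeemanAux.isZero_pt hco hg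
  · -- homotopy colimits
    intro Y f hY0 hcone W u w hT
    -- each `Y i` is in the kernel
    have hYi : ∀ i, IsZero (H'.obj (Y i)) := by
      intro i
      induction i with
      | zero => exact hY0
      | succ i ih =>
        obtain ⟨Z, g', h', mem⟩ := Pretriangulated.distinguished_cocone_triangle (f i)
        have hZ : IsZero (H'.obj Z) := hcone i Z g' h' mem
        obtain ⟨hz, hex⟩ := hH _ mem
        exact hex.isZero_of_both_zeros (ih.eq_of_src _ _) (hZ.eq_of_tgt _ _)
    -- the coproduct is in the kernel
    have hcop : IsZero (H'.obj (∐ Y)) :=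
      NeemanAux.isZero_pt (isColimitOfHasCoproductOfPreservesColimit H' Y) hYi
    -- `H'` of the shifted hocolim map is mono
    have hving := isColimitOfHasCoproductOfPreservesColimit
      (shiftFunctor C (1 : ℤ) ⋙ H') Y
    have hmono : Mono (H'.map ((hocolimMap C Y f)⟦(1 : ℤ)⟧')) := by
      refine NeemanAux.mono_hocolim (fun i => H'.obj ((Y i)⟦(1 : ℤ)⟧))
        (fun i => H'.map ((f i)⟦(1 : ℤ)⟧')) (H'.obj ((∐ Y)⟦(1 : ℤ)⟧))
        (fun i => H'.map ((Sigma.ι Y i)⟦(1 : ℤ)⟧')) hving _ ?_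
      intro i
      have hcomp : Sigma.ι Y i ≫ hocolimMap C Y f =
          Sigma.ι Y i - f i ≫ Sigma.ι Y (i + 1) := by
        simp [hocolimMap]
      calc H'.map ((Sigma.ι Y i)⟦(1 : ℤ)⟧') ≫ H'.map ((hocolimMap C Y f)⟦(1 : ℤ)⟧')
          = H'.map ((Sigma.ι Y i ≫ hocolimMap C Y f)⟦(1 : ℤ)⟧') := by
            rw [← H'.map_comp, ← Functor.map_comp]
        _ = H'.map ((Sigma.ι Y i - f i ≫ Sigma.ι Y (i + 1))⟦(1 : ℤ)⟧') := by rw [hcomp]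
        _ = H'.map ((Sigma.ι Y i)⟦(1 : ℤ)⟧') -
              H'.map ((f i)⟦(1 : ℤ)⟧') ≫ H'.map ((Sigma.ι Y (i + 1))⟦(1 : ℤ)⟧') := by
            rw [Functor.map_sub, Functor.map_sub, Functor.map_comp, H'.map_comp]
    -- exact sequences from the rotations of the triangle
    obtain ⟨z1, ex1⟩ := hH _ (rot_of_distTriang _ hT)
    obtain ⟨z2, ex2⟩ := hH _ (rot_of_distTriang _ (rot_of_distTriang _ hT))
    have hu : H'.map u = 0 := hcop.eq_of_src _ _
    have hw : H'.map w = 0 := by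
      haveI : Mono (H'.map (-((hocolimMap C Y f)⟦(1 : ℤ)⟧'))) := by
        rw [Functor.map_neg]
        haveI : IsIso (-(𝟙 (H'.obj ((∐ Y)⟦(1 : ℤ)⟧)))) :=
          ⟨-(𝟙 _), by simp, by simp⟩
        rw [show -(H'.map ((hocolimMap C Y f)⟦(1 : ℤ)⟧')) =
          H'.map ((hocolimMap C Y f)⟦(1 : ℤ)⟧') ≫ (-(𝟙 _)) by simp]
        exact mono_comp _ _
      exact zero_of_comp_mono (H'.map (-((hocolimMap C Y f)⟦(1 : ℤ)⟧'))) z2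
    exact ex1.isZero_of_both_zeros hu hw

end VanishAux

/-- If `H'` is a homological functor from `C` to an AB5 abelian category preserving
coproducts and vanishing on `P`, then `H'` vanishes on the strong extension-closure
of `P`. In particular, if `D` is a class of compact objects with `D ⊥ P`, then
`D ⊥ (strong extension-closure of P)`. -/
theorem vanish_on_strongExtClosure_of_cc
    [HasCoproducts.{v} C] [HasCountableCoproducts C]
    {A : Type u₂} [Category.{v₂} A] [Abelian A] [HasFilteredColimits A] [AB5 A]
    (P : Set C) (H' : C ⥤ A)
    (hH : ∀ (T : Triangle C), T ∈ (distTriang C) →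
      ∃ (hz : H'.map T.mor₁ ≫ H'.map T.mor₂ = 0),
        (ShortComplex.mk (H'.map T.mor₁) (H'.map T.mor₂) hz).Exact)
    (hcc : ∀ (J : Type v), PreservesColimitsOfShape (Discrete J) H')
    (hvanish : ∀ X ∈ P, IsZero (H'.obj X)) :
    (∀ X ∈ strongExtClosure C P, IsZero (H'.obj X)) ∧
    (∀ D : Set C, (∀ X ∈ D, IsCompactObj C X) →
      (∀ X ∈ D, ∀ Y ∈ P, ∀ f : X ⟶ Y, f = 0) →
      ∀ X ∈ D, ∀ Y ∈ strongExtClosure C P, ∀ f : X ⟶ Y, f = 0) := by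
  constructor
  · exact vanishAux P H' hH hcc hvanish
  · intro D hcomp hperp X hX Y hY f
    have h2 : IsZero ((preadditiveCoyoneda.obj (op X)).obj Y) := by
      refine vanishAux P (preadditiveCoyoneda.obj (op X)) ?_ (hcomp X hX) ?_ Y hY
      · intro T hT
        exact ⟨_, (preadditiveCoyoneda.obj (op X)).map_distinguished_exact T hT⟩
      · intro Z hZ
        exact @AddCommGrpCat.isZero_of_subsingleton _
          ⟨fun a b => (hperp X hX Z hZ a).trans (hperp X hX Z hZ b).symm⟩
    have hid : 𝟙 ((preadditiveCoyoneda.obj (op X)).obj Y) = 0 := by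
      rw [← IsZero.iff_id_eq_zero]; exact h2
    have : (𝟙 ((preadditiveCoyoneda.obj (op X)).obj Y)) f =
        (0 : (preadditiveCoyoneda.obj (op X)).obj Y ⟶
          (preadditiveCoyoneda.obj (op X)).obj Y) f := by rw [hid]
    exact this
end

section
/- Let C be a triangulated category, and L, R classes of objects with L ⊥ R such that every object M of C fits in a distinguished triangle l → M → r → l[1] with l ∈ L, r ∈ R. Then the pair (kar(L), kar(R)), where kar(D) denotes the class of all retracts of elements of D in C, is a torsion theory on C. -/
open CategoryTheory CategoryTheory.Limits CategoryTheory.Pretriangulated Opposite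

universe v u v₂ u₂

variable (C : Type u) [Category.{v} C] [HasZeroObject C] [HasShift C ℤ]
  [Preadditive C] [∀ (n : ℤ), (shiftFunctor C n).Additive] [Pretriangulated C]


/-- A torsion theory on a pretriangulated category `D`: a pair of classes `(L, R)` of
objects with `L^⊥ = R`, `L = ^⊥R`, and such that every object `M` fits into a
distinguished triangle `L_M ⟶ M ⟶ R_M ⟶ L_M⟦1⟧` with `L_M ∈ L` and `R_M ∈ R`
(an `s`-decomposition of `M`). -/
structure TorsionTheory (D : Type u₂) [Category.{v₂} D] [HasZeroObject D]
    [HasShift D ℤ] [Preadditive D] [∀ (n : ℤ), (shiftFunctor D n).Additive]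
    [Pretriangulated D] where
  /-- the "torsion" class -/
  L : Set D
  /-- the "torsion-free" class -/
  R : Set D
  mem_R_iff : ∀ Y : D, Y ∈ R ↔ ∀ X ∈ L, ∀ f : X ⟶ Y, f = 0
  mem_L_iff : ∀ X : D, X ∈ L ↔ ∀ Y ∈ R, ∀ f : X ⟶ Y, f = 0
  decomposition : ∀ M : D, ∃ (LM RM : D) (a : LM ⟶ M) (n : M ⟶ RM) (d : RM ⟶ LM⟦(1 : ℤ)⟧),
    LM ∈ L ∧ RM ∈ R ∧ Triangle.mk a n d ∈ distTriang D

/-- If `L ⊥ R` and every object admits a decomposition triangle with first term in `L`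
and third term in `R`, then the pair of retract-closures `(kar L, kar R)` is a torsion
theory on `C`. -/
theorem karoubi_closures_torsionTheory (L R : Set C)
    (horth : ∀ X ∈ L, ∀ Y ∈ R, ∀ f : X ⟶ Y, f = 0)
    (hdec : ∀ M : C, ∃ (l r : C) (a : l ⟶ M) (n : M ⟶ r) (d : r ⟶ l⟦(1 : ℤ)⟧),
      l ∈ L ∧ r ∈ R ∧ Triangle.mk a n d ∈ distTriang C) :
    ∃ s : TorsionTheory C,
      s.L = {X : C | ∃ Y ∈ L, ∃ (i : X ⟶ Y) (p : Y ⟶ X), i ≫ p = 𝟙 X} ∧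
      s.R = {X : C | ∃ Y ∈ R, ∃ (i : X ⟶ Y) (p : Y ⟶ X), i ≫ p = 𝟙 X} := by
  set kL := {X : C | ∃ Y ∈ L, ∃ (i : X ⟶ Y) (p : Y ⟶ X), i ≫ p = 𝟙 X} with hkL
  set kR := {X : C | ∃ Y ∈ R, ∃ (i : X ⟶ Y) (p : Y ⟶ X), i ≫ p = 𝟙 X} with hkR
  have horth' : ∀ X ∈ kL, ∀ Y ∈ kR, ∀ f : X ⟶ Y, f = 0 := by
    rintro X ⟨X', hX', iX, pX, hX⟩ Y ⟨Y', hY', iY, pY, hY⟩ f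
    calc f = iX ≫ (pX ≫ f ≫ iY) ≫ pY := by simp [reassoc_of% hX, hY]
    _ = 0 := by rw [horth X' hX' Y' hY' (pX ≫ f ≫ iY), zero_comp, comp_zero]
  refine ⟨⟨kL, kR, ?_, ?_, ?_⟩, rfl, rfl⟩
  · intro Y
    constructor
    · intro hY X hX f
      exact horth' X hX Y hY f
    · intro h
      obtain ⟨l, r, a, n, d, hl, hr, hT⟩ := hdec Y
      have ha : a = 0 := h l ⟨l, hl, 𝟙 l, 𝟙 l, by simp⟩ a
      obtain ⟨g, hg⟩ := Triangle.yoneda_exact₂ _ hT (𝟙 Y)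
        (by show a ≫ 𝟙 Y = 0; rw [ha, Category.comp_id])
      exact ⟨r, hr, n, g, hg.symm⟩
  · intro X
    constructor
    · intro hX Y hY f
      exact horth' X hX Y hY f
    · intro h
      obtain ⟨l, r, a, n, d, hl, hr, hT⟩ := hdec X
      have hn : n = 0 := h r ⟨r, hr, 𝟙 r, 𝟙 r, by simp⟩ n
      obtain ⟨g, hg⟩ := Triangle.coyoneda_exact₂ _ hT (𝟙 X)
        (by show 𝟙 X ≫ n = 0; rw [hn]; simp)
      exact ⟨l, hl, g, a, hg.symm⟩
  · intro M
    obtain ⟨l, r, a, n, d, hl, hr, hT⟩ := hdec M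
    exact ⟨l, r, a, n, d, ⟨l, hl, 𝟙 l, 𝟙 l, by simp⟩, ⟨r, hr, 𝟙 r, 𝟙 r, by simp⟩, hT⟩
end

section
/- Let C be a triangulated category with coproducts, P a nonzero compact object of C, and suppose the Brown–Comenetz dual P̂ (representing M ↦ Hom_Ab(Hom_C(P,M), ℚ/ℤ)) exists. Then P̂ is not compact in C^op; i.e., the functor Hom_C(−, P̂) does not send all small products in C to coproducts of abelian groups. -/
open CategoryTheory CategoryTheory.Limits CategoryTheory.Pretriangulated Opposite

universe v u v₂ u₂

variable (C : Type u) [Category.{v} C] [HasZeroObject C] [HasShift C ℤ]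
  [Preadditive C] [∀ (n : ℤ), (shiftFunctor C n).Additive] [Pretriangulated C]


/-- The Brown–Comenetz functor of an object `P`:
`M ↦ Hom_Ab(Hom_C(P, M), ℚ/ℤ) : Cᵒᵖ ⥤ Ab`, where `ℚ/ℤ` is realized as
`AddCircle (1 : ℚ)` (lifted to the appropriate universe). An object representing
this functor is called the Brown–Comenetz dual of `P`. -/
noncomputable def BCfunctor (P : C) : Cᵒᵖ ⥤ AddCommGrpCat.{v} :=
  (preadditiveCoyoneda.obj (op P)).op ⋙
    preadditiveYoneda.obj (AddCommGrpCat.of (ULift.{v} (AddCircle (1 : ℚ))))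

/-- In `AddCommGrp`, the images of the structure maps of a colimit cocone over a discrete
diagram generate the cocone point. -/
lemma cofan_closure_eq_top {ι : Type v} (D : Discrete ι ⥤ AddCommGrpCat.{v})
    (c : Cocone D) (hc : IsColimit c) :
    AddSubgroup.closure (⋃ i : ι, Set.range (c.ι.app ⟨i⟩)) = (⊤ : AddSubgroup c.pt) := by
  set S : AddSubgroup c.pt := AddSubgroup.closure (⋃ i : ι, Set.range (c.ι.app ⟨i⟩)) with hS
  have hq : AddCommGrpCat.ofHom (QuotientAddGroup.mk' S)
      = (0 : c.pt ⟶ AddCommGrpCat.of (c.pt ⧸ S)) := by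
    apply hc.hom_ext
    rintro ⟨i⟩
    ext x
    have hx : (c.ι.app ⟨i⟩) x ∈ S :=
      AddSubgroup.subset_closure (Set.mem_iUnion.2 ⟨i, ⟨x, rfl⟩⟩)
    exact ((QuotientAddGroup.eq_zero_iff _).2 hx).trans rfl
  ext x
  simp only [AddSubgroup.mem_top, iff_true]
  have := congrArg (fun f => (f : c.pt ⟶ AddCommGrpCat.of (c.pt ⧸ S)) x) hq
  dsimp at this
  exact (QuotientAddGroup.eq_zero_iff x).1 (this.trans rfl)

open CategoryTheory.Pretriangulated.Opposite in
/-- If `P` is a nonzero compact object of `C` (which has coproducts, and products so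
that "compactness in `Cᵒᵖ`" is not vacuous) and the Brown–Comenetz dual `P̂` of `P`
exists, then `P̂` is not compact in `Cᵒᵖ`: the functor `Hom_C(-, P̂)` does not send all
small products in `C` to coproducts of abelian groups. -/
theorem brownComenetz_dual_not_compact [HasCoproducts.{v} C] [HasProducts.{v} C]
    (P : C) (hP0 : ¬ IsZero P) (hP : IsCompactObj C P)
    (Phat : C) (hrep : Nonempty (BCfunctor C P ≅ preadditiveYoneda.obj Phat)) :
    ¬ (∀ (J : Type v), PreservesColimitsOfShape (Discrete J)
        (preadditiveYoneda.obj Phat : Cᵒᵖ ⥤ AddCommGrpCat.{v})) := by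
  obtain ⟨e⟩ := hrep
  intro h
  -- the Brown–Comenetz functor preserves coproducts indexed by `ULift ℕ` in `Cᵒᵖ`
  haveI : PreservesColimitsOfShape (Discrete (ULift.{v} ℕ)) (BCfunctor C P) := by
    haveI := h (ULift.{v} ℕ)
    exact preservesColimitsOfShape_of_natIso e.symm
  set F := BCfunctor C P with hFdef
  set X : ULift.{v} ℕ → C := fun _ => P with hXdef
  -- the product of countably many copies of `P`, as a limit fan
  let fan : Fan X := Fan.mk (∏ᶜ X) (Pi.π X)
  have hfan : IsLimit fan := productIsProduct X
  let cofan := fan.op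
  have hcofan : IsColimit cofan := Fan.IsLimit.op hfan
  have hc : IsColimit (F.mapCocone cofan) := isColimitOfPreserves F hcofan
  -- the "tail diagonal" morphisms
  let g : ℕ → (P ⟶ ∏ᶜ X) := fun N => Pi.lift (fun i => if N ≤ i.down then 𝟙 P else 0)
  have hgπ : ∀ N i, g N ≫ Pi.π X i = if N ≤ i.down then 𝟙 P else 0 := fun N i => by
    simp [g]
  -- the eventually-zero subgroup of `∏_ℕ Hom(P, P)`
  let S : AddSubgroup (∀ _ : ℕ, (P ⟶ P)) :=
    { carrier := {x | ∃ N, ∀ n, N ≤ n → x n = 0}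
      zero_mem' := ⟨0, fun n _ => rfl⟩
      add_mem' := by
        rintro a b ⟨N, hN⟩ ⟨M, hM⟩
        exact ⟨max N M, fun n hn => by
          simp [hN n (le_trans (le_max_left _ _) hn), hM n (le_trans (le_max_right _ _) hn)]⟩
      neg_mem' := by
        rintro a ⟨N, hN⟩
        exact ⟨N, fun n hn => by simp [hN n hn]⟩ }
  -- the class of the constant sequence `𝟙 P` is nonzero in the quotient
  have hone : (QuotientAddGroup.mk' S (fun _ => 𝟙 P)) ≠ 0 := by
    intro h0
    rw [QuotientAddGroup.mk'_apply, QuotientAddGroup.eq_zero_iff] at h0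
    obtain ⟨N, hN⟩ := h0
    exact hP0 ((Limits.IsZero.iff_id_eq_zero P).2 (hN N le_rfl))
  obtain ⟨χ, hχ⟩ := CharacterModule.exists_character_apply_ne_zero_of_ne_zero hone
  -- the coordinates map
  let coords : (P ⟶ ∏ᶜ X) →+ (∀ _ : ℕ, (P ⟶ P)) :=
    { toFun := fun a n => a ≫ Pi.π X ⟨n⟩
      map_zero' := by funext n; simp
      map_add' := fun a b => by funext n; simp [Preadditive.add_comp] }
  -- the functional on `Hom(P, ∏ P)`
  let φ : (P ⟶ ∏ᶜ X) →+ (ULift.{v} (AddCircle (1 : ℚ))) :=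
    (AddEquiv.ulift.symm.toAddMonoidHom).comp
      ((χ : _ →+ AddCircle (1 : ℚ)).comp ((QuotientAddGroup.mk' S).comp coords))
  have hφg : ∀ N, φ (g N) = AddEquiv.ulift.symm (χ (QuotientAddGroup.mk' S (fun _ => 𝟙 P))) := by
    intro N
    have : QuotientAddGroup.mk' S (coords (g N)) = QuotientAddGroup.mk' S (fun _ => 𝟙 P) := by
      rw [QuotientAddGroup.mk'_apply, QuotientAddGroup.mk'_apply, QuotientAddGroup.eq]
      refine ⟨N, fun n hn => ?_⟩
      simp [coords, hgπ, hn]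
    simp only [φ, AddMonoidHom.comp_apply, this, AddEquiv.coe_toAddMonoidHom]
    exact congrArg _ (congrArg χ this)
  have hφg' : ∀ N, φ (g N) ≠ 0 := by
    intro N
    rw [hφg N]
    intro h0
    exact hχ (congrArg ULift.down h0)
  -- `φ` as an element of `F.obj (op (∏ᶜ X))`
  let t : (F.obj (op (∏ᶜ X))) :=
    show AddCommGrpCat.of (P ⟶ ∏ᶜ X) ⟶ AddCommGrpCat.of (ULift.{v} (AddCircle (1 : ℚ))) from
      AddCommGrpCat.ofHom φ
  let ev : (F.obj (op (∏ᶜ X))) → (P ⟶ ∏ᶜ X) → ULift.{v} (AddCircle (1 : ℚ)) :=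
    fun ψ => (show AddCommGrpCat.of (P ⟶ ∏ᶜ X) ⟶ AddCommGrpCat.of (ULift.{v} (AddCircle (1 : ℚ)))
      from ψ)
  have hev_add : ∀ (ψ ψ' : F.obj (op (∏ᶜ X))) (x : P ⟶ ∏ᶜ X),
      ev (ψ + ψ') x = ev ψ x + ev ψ' x := fun _ _ _ => rfl
  have hev_neg : ∀ (ψ : F.obj (op (∏ᶜ X))) (x : P ⟶ ∏ᶜ X),
      ev (-ψ) x = - ev ψ x := fun _ _ => rfl
  have hev_zero : ∀ (x : P ⟶ ∏ᶜ X), ev 0 x = 0 := fun _ => rfl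
  -- the subgroup of functionals killing all sufficiently late tails
  let T : AddSubgroup (F.obj (op (∏ᶜ X))) :=
    { carrier := {ψ | ∃ N, ∀ M, N ≤ M → ev ψ (g M) = 0}
      zero_mem' := ⟨0, fun M _ => hev_zero _⟩
      add_mem' := by
        rintro a b ⟨N, hN⟩ ⟨N', hN'⟩
        exact ⟨max N N', fun M hM => by
          rw [hev_add, hN M (le_trans (le_max_left _ _) hM),
            hN' M (le_trans (le_max_right _ _) hM), add_zero]⟩
      neg_mem' := by
        rintro a ⟨N, hN⟩
        exact ⟨N, fun M hM => by rw [hev_neg, hN M hM, neg_zero]⟩ }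
  -- every image of an injection lies in `T`
  have hsub : AddSubgroup.closure
      (⋃ i : ULift.{v} ℕ, Set.range ((F.mapCocone cofan).ι.app ⟨i⟩) : Set (F.obj (op (∏ᶜ X)))) ≤ T := by
    rw [AddSubgroup.closure_le]
    rintro ψ hψ
    obtain ⟨i, ⟨ψ', rfl⟩⟩ := Set.mem_iUnion.1 hψ
    refine ⟨i.down + 1, fun M hM => ?_⟩
    have hzero : g M ≫ Pi.π X i = 0 := by
      rw [hgπ]
      rw [if_neg (by omega)]
    have hcomp : ev ((F.mapCocone cofan).ι.app ⟨i⟩ ψ') (g M)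
        = (show AddCommGrpCat.of (P ⟶ P) ⟶ AddCommGrpCat.of (ULift.{v} (AddCircle (1 : ℚ)))
            from ψ') (g M ≫ Pi.π X i) := rfl
    rw [hcomp, hzero, map_zero]
  -- hence `t ∈ T`, contradiction
  have ht : t ∈ T := by
    apply hsub
    refine (cofan_closure_eq_top _ _ hc).ge ?_
    trivial
  obtain ⟨N, hN⟩ := ht
  have : ev t (g N) = φ (g N) := rfl
  exact hφg' N (this ▸ hN N le_rfl)
end
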